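/- Let q_u ∈ (0,1], q_uf, q_ub, q_um, q_ur ∈ [0,1] with q_uf + q_ub = 1 and q_um + q_ur = 1, and let T_ud^f, T_ur^f, T_ud^b, T_ur^b, D_r, D_a be real numbers with D_a ≥ 0 and D_r ≥ 0. Set T_u = q_uf·(q_um·T_ud^f + q_ur·T_ur^f) + q_ub·(T_ud^b + T_ur^b) and assume T_u > 0. Suppose real numbers D_fm, D_fr, D_b satisfy the system: D_fm = q_u·T_ud^f + q_u·(1 − T_ud^f)·(1 + q_uf·q_um·D_fm + q_uf·q_ur·(D_a + D_fr) + q_ub·(D_a + D_b)) + (1 − q_u)·(1 + D_fm); D_fr = q_u·T_ur^f·(1 + D_r) + q_u·(1 − T_ur^f)·(1 + q_uf·q_ur·D_fr + q_uf·q_um·(D_a + D_fm) + q_ub·(D_a + D_b)) + (1 − q_u)·(1 + D_fr); D_b = q_u·T_ud^b + q_u·T_ur^b·(1 + D_r) + q_u·(1 − T_ud^b − T_ur^b)·(1 + q_ub·D_b + q_uf·q_um·(D_a + D_fm) + q_uf·q_ur·(D_a + D_fr)) + (1 − q_u)·(1 + D_b). Define D = q_uf·q_um·(D_fm + (1 −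 q_uf·q_um)·D_a) + q_uf·q_ur·(D_fr + (1 − q_uf·q_ur)·D_a) + q_ub·(D_b + (1 − q_ub)·D_a). Then D = (1 + q_u·D_r·(q_uf·q_ur·T_ur^f + q_ub·T_ur^b) + D_a·q_u·C) / (q_u·T_u), where C = 1 + (q_uf·q_um)²·(T_ud^f − T_u − 1) + (q_uf·q_ur)²·(T_ur^f − T_u − 1) + (q_ub)²·(T_ud^b + T_ur^b − T_u − 1). -/
import Mathlib


/-- closed-form average delay per packet, constant alignment
duration; eq. (29)–(34) of the paper. If `D_fm, D_fr, D_b` satisfy the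
recursive delay equations, then the strategy-averaged delay
`D = Σᵢ P(s=i)·(Dᵢ + (1 − P(s=i))·D_a)` equals
`(1 + q_u·D_r·(q_uf·q_ur·T_ur^f + q_ub·T_ur^b) + D_a·q_u·C)/(q_u·T_u)`. -/
theorem average_delay_closed_form
    (q_u q_uf q_ub q_um q_ur : ℝ)
    (Tudf Turf Tudb Turb D_r D_a D_fm D_fr D_b T_u C D : ℝ)
    (hqu0 : 0 < q_u) (hqu1 : q_u ≤ 1)
    (huf0 : 0 ≤ q_uf) (huf1 : q_uf ≤ 1)
    (hub0 : 0 ≤ q_ub) (hub1 : q_ub ≤ 1)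
    (hum0 : 0 ≤ q_um) (hum1 : q_um ≤ 1)
    (hur0 : 0 ≤ q_ur) (hur1 : q_ur ≤ 1)
    (hsum1 : q_uf + q_ub = 1) (hsum2 : q_um + q_ur = 1)
    (hDa : 0 ≤ D_a) (hDr : 0 ≤ D_r)
    (hTu : T_u = q_uf * (q_um * Tudf + q_ur * Turf) + q_ub * (Tudb + Turb))
    (hTupos : 0 < T_u)
    (hfm : D_fm = q_u * Tudf
        + q_u * (1 - Tudf) * (1 + q_uf * q_um * D_fm
            + q_uf * q_ur * (D_a + D_fr) + q_ub * (D_a + D_b))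
        + (1 - q_u) * (1 + D_fm))
    (hfr : D_fr = q_u * Turf * (1 + D_r)
        + q_u * (1 - Turf) * (1 + q_uf * q_ur * D_fr
            + q_uf * q_um * (D_a + D_fm) + q_ub * (D_a + D_b))
        + (1 - q_u) * (1 + D_fr))
    (hb : D_b = q_u * Tudb + q_u * Turb * (1 + D_r)
        + q_u * (1 - Tudb - Turb) * (1 + q_ub * D_b
            + q_uf * q_um * (D_a + D_fm) + q_uf * q_ur * (D_a + D_fr))
        + (1 - q_u) * (1 + D_b))
    (hD : D = q_uf * q_um * (D_fm + (1 - q_uf * q_um) * D_a)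
        + q_uf * q_ur * (D_fr + (1 - q_uf * q_ur) * D_a)
        + q_ub * (D_b + (1 - q_ub) * D_a))
    (hC : C = 1 + (q_uf * q_um) ^ 2 * (Tudf - T_u - 1)
        + (q_uf * q_ur) ^ 2 * (Turf - T_u - 1)
        + q_ub ^ 2 * (Tudb + Turb - T_u - 1)) :
    D = (1 + q_u * D_r * (q_uf * q_ur * Turf + q_ub * Turb) + D_a * q_u * C)
          / (q_u * T_u) := by
  have hub : q_ub = 1 - q_uf := by linarith
  have hur : q_ur = 1 - q_um := by linarith
  subst hub hur hTu hC hD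
  have hne : q_u * (q_uf * (q_um * Tudf + (1 - q_um) * Turf) + (1 - q_uf) * (Tudb + Turb)) ≠ 0 :=
    ne_of_gt (mul_pos hqu0 hTupos)
  rw [eq_div_iff hne]
  linear_combination (q_uf * q_um) * hfm + (q_uf * (1 - q_um)) * hfr + (1 - q_uf) * hb
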